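/- Let k ∈ ℝ and define f : ℝ → ℝ by f(x) = exp(∫₀ˣ (k - erf(y)) dy), where erf(y) = (2/√π) ∫₀^y e^{-t²} dt. Then: (i) f is differentiable with f'(x) = (k - erf(x)) f(x) for all x ∈ ℝ, so that -i f'(x) + i (k - erf(x)) f(x) = 0 for all x (the spinor (f, 0) is a zero mode of the error-function Dirac fiber operator); and (ii) if -1 < k < 1 then f is square-integrable on ℝ. -/

import Mathlib

open MeasureTheory

/-- The Gauss error function `erf y = (2/√π) ∫₀^y e^{-t²} dt`. -/
noncomputable def erf (y : ℝ) : ℝ :=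
  2 / Real.sqrt Real.pi * ∫ t in (0:ℝ)..y, Real.exp (-t^2)

lemma hasDerivAt_primitive' {g : ℝ → ℝ} (hg : Continuous g) (a x : ℝ) :
    HasDerivAt (fun x => ∫ t in a..x, g t) (g x) x :=
  intervalIntegral.integral_hasDerivAt_right (hg.intervalIntegrable a x)
    hg.aestronglyMeasurable.stronglyMeasurableAtFilter hg.continuousAt

lemma gauss_cont : Continuous fun t : ℝ => Real.exp (-t^2) :=
  Real.continuous_exp.comp (continuous_pow 2).neg

lemma erf_continuous : Continuous erf := by
  have h : Continuous fun y : ℝ => ∫ t in (0:ℝ)..y, Real.exp (-t^2) := by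
    rw [continuous_iff_continuousAt]
    exact fun y => (hasDerivAt_primitive' gauss_cont 0 y).differentiableAt.continuousAt
  exact continuous_const.mul h

lemma erf_tendsto_atTop : Filter.Tendsto erf Filter.atTop (nhds 1) := by
  have hint : IntegrableOn (fun t : ℝ => Real.exp (-t^2)) (Set.Ioi 0) := by
    have := (integrable_exp_neg_mul_sq (show (0:ℝ) < 1 by norm_num)).integrableOn
      (s := Set.Ioi (0:ℝ))
    simpa using this
  have h1 : Filter.Tendsto (fun y => ∫ t in (0:ℝ)..y, Real.exp (-t^2)) Filter.atTop
      (nhds (∫ t in Set.Ioi (0:ℝ), Real.exp (-t^2))) :=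
    intervalIntegral_tendsto_integral_Ioi 0 hint Filter.tendsto_id
  have h2 : (∫ t in Set.Ioi (0:ℝ), Real.exp (-t^2)) = Real.sqrt Real.pi / 2 := by
    have := integral_gaussian_Ioi 1
    simpa using this
  rw [h2] at h1
  have h3 := h1.const_mul (2 / Real.sqrt Real.pi)
  have hπ : Real.sqrt Real.pi ≠ 0 := ne_of_gt (Real.sqrt_pos.2 Real.pi_pos)
  have h4 : 2 / Real.sqrt Real.pi * (Real.sqrt Real.pi / 2) = 1 := by field_simp
  rw [h4] at h3
  exact h3

lemma erf_neg (y : ℝ) : erf (-y) = - erf y := by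
  unfold erf
  have h2 := intervalIntegral.integral_comp_neg (a := (0:ℝ)) (b := y)
    (fun t => Real.exp (-t^2))
  simp only [neg_sq, neg_zero] at h2
  have h : ∫ t in (0:ℝ)..(-y), Real.exp (-t^2) = -∫ t in (0:ℝ)..y, Real.exp (-t^2) := by
    rw [intervalIntegral.integral_symm, ← h2]
  rw [h]; ring

lemma erf_tendsto_atBot : Filter.Tendsto erf Filter.atBot (nhds (-1)) := by
  have h := (erf_tendsto_atTop.comp Filter.tendsto_neg_atBot_atTop).neg
  have heq : (fun y : ℝ => -(erf (-y))) = erf := by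
    funext y; rw [erf_neg]; ring
  simpa [Function.comp_def, heq] using h

theorem stmt13 (k : ℝ) (f : ℝ → ℝ)
    (hf : f = fun x => Real.exp (∫ y in (0:ℝ)..x, (k - erf y))) :
    (Differentiable ℝ f ∧ ∀ x : ℝ, deriv f x = (k - erf x) * f x) ∧
    (∀ x : ℝ, -Complex.I * Complex.ofReal (deriv f x) +
        Complex.I * Complex.ofReal (k - erf x) * Complex.ofReal (f x) = 0) ∧
    (-1 < k → k < 1 → MemLp f 2 volume) := by
  set F : ℝ → ℝ := fun x => ∫ y in (0:ℝ)..x, (k - erf y) with hFdef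
  have hcont : Continuous fun y : ℝ => k - erf y := continuous_const.sub erf_continuous
  have hF : ∀ x, HasDerivAt F (k - erf x) x := fun x => hasDerivAt_primitive' hcont 0 x
  have hf' : ∀ x, HasDerivAt f ((k - erf x) * f x) x := by
    intro x
    rw [hf]
    simpa [mul_comm] using (hF x).exp
  have hdiff : Differentiable ℝ f := fun x => (hf' x).differentiableAt
  have hderiv : ∀ x, deriv f x = (k - erf x) * f x := fun x => (hf' x).deriv
  refine ⟨⟨hdiff, hderiv⟩, ?_, ?_⟩
  · intro x
    rw [hderiv x]
    push_cast
    ring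
  · intro hk1 hk2
    -- eventual bounds on erf
    obtain ⟨A, hA⟩ := (Filter.eventually_atTop).1
      (erf_tendsto_atTop.eventually (eventually_ge_nhds (show (k+1)/2 < 1 by linarith)))
    obtain ⟨A', hA'⟩ := (Filter.eventually_atBot).1
      (erf_tendsto_atBot.eventually (eventually_le_nhds (show (-1:ℝ) < (k-1)/2 by linarith)))
    set B : ℝ := max A A' with hBdef
    have hii : ∀ a b : ℝ, IntervalIntegrable (fun y => k - erf y) volume a b :=
      fun a b => hcont.intervalIntegrable a b
    have hFsplit : ∀ a x : ℝ, F x = F a + ∫ y in a..x, (k - erf y) := by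
      intro a x
      have h := intervalIntegral.integral_add_adjacent_intervals (hii 0 a) (hii a x)
      simp only [hFdef]
      linarith [h]
    have hright : ∀ x, B ≤ x → F x ≤ F B + (k-1)/2 * (x - B) := by
      intro x hx
      rw [hFsplit B x]
      have h1 : (∫ y in B..x, (k - erf y)) ≤ ∫ _y in B..x, ((k-1)/2 : ℝ) := by
        apply intervalIntegral.integral_mono_on hx (hii B x) intervalIntegrable_const
        intro y hy
        have := hA y (le_trans (le_max_left A A') hy.1)
        linarith
      rw [intervalIntegral.integral_const, smul_eq_mul] at h1
      nlinarith [h1]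
    have hleft : ∀ x, x ≤ A' → F x ≤ F A' + (k+1)/2 * (x - A') := by
      intro x hx
      rw [hFsplit A' x]
      have h1 : (∫ _y in x..A', ((k+1)/2 : ℝ)) ≤ ∫ y in x..A', (k - erf y) := by
        apply intervalIntegral.integral_mono_on hx intervalIntegrable_const (hii x A')
        intro y hy
        have := hA' y hy.2
        linarith
      rw [intervalIntegral.integral_const, smul_eq_mul] at h1
      have h2 : (∫ y in A'..x, (k - erf y)) = -∫ y in x..A', (k - erf y) :=
        intervalIntegral.integral_symm x A'
      rw [h2]
      nlinarith [h1]
    have hsq : ∀ x, f x ^ 2 = Real.exp (F x + F x) := by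
      intro x
      rw [hf]
      simp [pow_two, ← Real.exp_add, hFdef]
    have hfc2 : Continuous fun x => f x ^ 2 := (hdiff.continuous.pow 2)
    have key : Integrable (fun x => f x ^ 2) volume := by
      rw [← integrableOn_univ]
      have hcover : (Set.univ : Set ℝ) ⊆ Set.Iic A' ∪ (Set.Icc A' B ∪ Set.Ioi B) := by
        intro x _
        rcases le_or_gt x A' with h | h
        · exact Set.mem_union_left _ h
        rcases le_or_gt x B with h2 | h2
        · exact Set.mem_union_right _ (Set.mem_union_left _ ⟨h.le, h2⟩)
        · exact Set.mem_union_right _ (Set.mem_union_right _ h2)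
      have hIcc : IntegrableOn (fun x => f x ^ 2) (Set.Icc A' B) volume :=
        hfc2.integrableOn_Icc
      have hIoi : IntegrableOn (fun x => f x ^ 2) (Set.Ioi B) volume := by
        have hgi : IntegrableOn (fun x => Real.exp (-(1-k) * x)) (Set.Ioi B) volume :=
          exp_neg_integrableOn_Ioi B (by linarith)
        refine Integrable.mono' (hgi.const_mul (Real.exp (2 * F B - (k-1) * B)))
          hfc2.aestronglyMeasurable.restrict ?_
        refine (ae_restrict_iff' measurableSet_Ioi).2 (Filter.Eventually.of_forall ?_)
        intro x hx
        have hx' : B ≤ x := le_of_lt hx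
        rw [Real.norm_eq_abs, abs_of_nonneg (sq_nonneg _), hsq x, ← Real.exp_add]
        apply Real.exp_le_exp.mpr
        have := hright x hx'
        nlinarith [this]
      have hIic : IntegrableOn (fun x => f x ^ 2) (Set.Iic A') volume := by
        have hgi : IntegrableOn (fun x => Real.exp ((k+1) * x)) (Set.Iic A') volume := by
          rw [← (Measure.measurePreserving_neg (volume : Measure ℝ)).integrableOn_comp_preimage
            (Homeomorph.neg ℝ).measurableEmbedding]
          rw [show (Neg.neg ⁻¹' Set.Iic A' : Set ℝ) = Set.Ici (-A') from by
            ext x; simp [neg_le]]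
          rw [integrableOn_Ici_iff_integrableOn_Ioi]
          have h := exp_neg_integrableOn_Ioi (-A') (show (0:ℝ) < k+1 by linarith)
          refine h.congr_fun (fun x _ => ?_) measurableSet_Ioi
          simp only [Function.comp_def]
          ring_nf
        refine Integrable.mono' (hgi.const_mul (Real.exp (2 * F A' - (k+1) * A')))
          hfc2.aestronglyMeasurable.restrict ?_
        refine (ae_restrict_iff' measurableSet_Iic).2 (Filter.Eventually.of_forall ?_)
        intro x hx
        rw [Real.norm_eq_abs, abs_of_nonneg (sq_nonneg _), hsq x, ← Real.exp_add]
        apply Real.exp_le_exp.mpr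
        have := hleft x hx
        nlinarith [this]
      exact ((hIic.union (hIcc.union hIoi))).mono_set hcover
    exact (memLp_two_iff_integrable_sq hdiff.continuous.aestronglyMeasurable).2 key
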